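/- If G is a finite cut group, then its center Z(G) is a cut group; equivalently, the exponent of Z(G) divides 4 or 6. -/

import Mathlib

/-- A finite group is a *cut group* (inverse semi-rational) if for every element `x`
and every integer `j` coprime to the order of `x`, `x ^ j` is conjugate to `x` or to `x⁻¹`. -/
def IsCutGroup (G : Type*) [Group G] : Prop :=
  ∀ x : G, ∀ j : ℤ, Int.gcd j (orderOf x) = 1 →
    IsConj (x ^ j) x ∨ IsConj (x ^ j) x⁻¹

/-- For a central element, the cut condition gives an equality. -/
lemma central_zpow_eq {G : Type*} [Group G] (hG : IsCutGroup G) (x : Subgroup.center G)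
    (j : ℤ) (hj : Int.gcd j (orderOf (x : G)) = 1) :
    (x : G) ^ j = (x : G) ∨ (x : G) ^ j = (x : G)⁻¹ := by
  have hx : ∀ g : G, g * (x : G) = (x : G) * g := Subgroup.mem_center_iff.mp x.2
  have hfix : ∀ a : G, IsConj ((x : G) ^ j) a → (x : G) ^ j = a := by
    intro a h
    obtain ⟨c, hc⟩ := isConj_iff.mp h
    have hcomm : Commute c (x : G) := hx c
    have hcj := (hcomm.zpow_right j).eq
    calc (x : G) ^ j = (x : G) ^ j * c * c⁻¹ := by group
      _ = c * (x : G) ^ j * c⁻¹ := by rw [← hcj]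
      _ = a := hc
  rcases hG (x : G) j hj with h | h
  · exact Or.inl (hfix _ h)
  · exact Or.inr (hfix _ h)

lemma central_pow_eq {G : Type*} [Group G] (hG : IsCutGroup G) (x : Subgroup.center G)
    (k : ℕ) (hk : Nat.Coprime k (orderOf (x : G))) :
    (x : G) ^ k = (x : G) ∨ (x : G) ^ k = (x : G)⁻¹ := by
  have hj : Int.gcd (k : ℤ) (orderOf (x : G)) = 1 := by
    rw [Int.gcd_natCast_natCast]; exact hk
  have := central_zpow_eq hG x (k : ℤ) hj
  rwa [zpow_natCast] at this

lemma central_order_dvd {G : Type*} [Group G] [Finite G] (hG : IsCutGroup G)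
    (x : Subgroup.center G) : orderOf (x : G) ∣ 4 ∨ orderOf (x : G) ∣ 6 := by
  set n := orderOf (x : G) with hn
  clear_value n
  have hnpos : 0 < n := hn ▸ orderOf_pos _
  have step : ∀ k : ℕ, Nat.Coprime (k + 1) n → n ∣ k ∨ n ∣ (k + 2) := by
    intro k hk
    have hk' : Nat.Coprime (k + 1) (orderOf (x : G)) := hn ▸ hk
    rw [hn]
    rcases central_pow_eq hG x (k + 1) hk' with h | h
    · left
      apply orderOf_dvd_of_pow_eq_one
      have : (x : G) ^ k * (x : G) = (x : G) := by rw [← pow_succ]; exact h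
      exact mul_right_cancel (by rwa [one_mul])
    · right
      apply orderOf_dvd_of_pow_eq_one
      have : (x : G) ^ (k + 2) = (x : G) ^ (k + 1) * (x : G) := by rw [pow_succ]
      rw [this, h, inv_mul_cancel]
  rcases Nat.even_or_odd n with hev | hodd
  · rcases Nat.even_or_odd (n / 2) with h2 | h2
    · -- 4 ∣ n : use exponent n/2 + 1
      have h2n : n = 2 * (n / 2) := by
        obtain ⟨a, ha⟩ := hev; omega
      have hcop : Nat.Coprime (n / 2 + 1) n := by
        have hc1 : Nat.Coprime (n / 2 + 1) 2 :=
          Nat.coprime_two_right.mpr ⟨n / 4, by obtain ⟨a, ha⟩ := h2; omega⟩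
        have hc2 : Nat.Coprime (1 + n / 2) (n / 2) :=
          Nat.coprime_add_self_left.mpr (Nat.coprime_one_left _)
        rw [Nat.add_comm] at hc2
        have := Nat.Coprime.mul_right hc1 hc2
        rwa [← h2n] at this
      rcases step (n / 2) hcop with h | h
      · exfalso
        have := Nat.le_of_dvd (by omega) h
        omega
      · have hle := Nat.le_of_dvd (by omega) h
        have hn4 : n = 4 := by obtain ⟨a, ha⟩ := h2; omega
        subst hn4
        exact Or.inl dvd_rfl
    · -- n ≡ 2 mod 4 : use exponent n/2 + 2
      have hm : n = 2 * (n / 2) := by obtain ⟨a, ha⟩ := hev; omega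
      have hcop : Nat.Coprime (n / 2 + 1 + 1) n := by
        have hc1 : Nat.Coprime (n / 2 + 2) 2 :=
          Nat.coprime_two_right.mpr (by obtain ⟨a, ha⟩ := h2; exact ⟨a + 1, by omega⟩)
        have hc2 : Nat.Coprime (2 + n / 2) (n / 2) :=
          Nat.coprime_add_self_left.mpr (Nat.coprime_two_left.mpr h2)
        rw [Nat.add_comm] at hc2
        have := Nat.Coprime.mul_right hc1 hc2
        rw [← hm] at this
        have he : n / 2 + 1 + 1 = n / 2 + 2 := by omega
        rwa [he]
      rcases step (n / 2 + 1) hcop with h | h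
      · have hle := Nat.le_of_dvd (by omega) h
        have hn2 : n = 2 := by omega
        subst hn2
        exact Or.inl ⟨2, rfl⟩
      · have hle := Nat.le_of_dvd (by omega) h
        have : n = 2 ∨ n = 6 := by
          obtain ⟨a, ha⟩ := hev; obtain ⟨b, hb⟩ := h2; omega
        rcases this with h' | h' <;> subst h'
        · exact Or.inr ⟨3, rfl⟩
        · exact Or.inr dvd_rfl
  · -- n odd : use exponent 2
    have hcop : Nat.Coprime (1 + 1) n := Nat.coprime_two_left.mpr hodd
    rcases step 1 hcop with h | h
    · have hn1 : n = 1 := Nat.dvd_one.mp h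
      subst hn1
      exact Or.inl (one_dvd _)
    · exact Or.inr (h.trans ⟨2, rfl⟩)

theorem stmt_3 {G : Type*} [Group G] [Finite G] (hG : IsCutGroup G) :
    IsCutGroup (Subgroup.center G) ∧
      (Monoid.exponent (Subgroup.center G) ∣ 4 ∨ Monoid.exponent (Subgroup.center G) ∣ 6) := by
  constructor
  · intro x j hj
    rw [← Subgroup.orderOf_coe] at hj
    rcases central_zpow_eq hG x j hj with h | h
    · left
      have : x ^ j = x := by
        apply Subtype.ext
        simpa using h
      rw [this]
    · right
      have : x ^ j = x⁻¹ := by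
        apply Subtype.ext
        simpa using h
      rw [this]
  · obtain ⟨g, hg⟩ := open scoped IsMulCommutative in Monoid.exists_orderOf_eq_exponent (G := Subgroup.center G)
      (Monoid.ExponentExists.of_finite (G := Subgroup.center G))
    rw [← hg, ← Subgroup.orderOf_coe]
    exact central_order_dvd hG g
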